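/- Let μ > 0, Γ² > 0, σ² ≥ 0, Γ̂³ ≥ 0, Γ⁴ = (Γ²)², and λ̂ > 0. With X(Λ) = 1/μ + ΛΓ²/(2(1 − Λ/μ)) − z for a fixed constant z, and Y(Λ) = σ² + ΛΓ̂³/(3(1 − Λ/μ)) + Λ²Γ⁴/(4(1 − Λ/μ)²), the function F(Λ) = (Λ / (2λ̂)) · (X(Λ) + sqrt(X(Λ)² + Y(Λ))) is convex on [0, μ). -/

import Mathlib

lemma qol {a b u1 u2 v1 v2 : ℝ} (ha : 0 ≤ a) (hb : 0 ≤ b) (hab : a + b = 1)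
    (hv1 : 0 < v1) (hv2 : 0 < v2) :
    (a*u1 + b*u2)^2 / (a*v1 + b*v2) ≤ a*(u1^2/v1) + b*(u2^2/v2) := by
  have hv : 0 < a*v1 + b*v2 := by
    rcases ha.eq_or_lt with h | h
    · have hb1 : b = 1 := by linarith
      rw [← h, hb1]; ring_nf; linarith
    · nlinarith [mul_nonneg hb hv2.le]
  have hb' : b = 1 - a := by linarith
  subst hb'
  have key : a*(u1^2/v1) + (1-a)*(u2^2/v2) - (a*u1+(1-a)*u2)^2/(a*v1+(1-a)*v2)
      = (a*(1-a)*(u1*v2 - u2*v1)^2)/(v1*v2*(a*v1+(1-a)*v2)) := by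
    field_simp
    ring
  have hpos : 0 ≤ (a*(1-a)*(u1*v2 - u2*v1)^2)/(v1*v2*(a*v1+(1-a)*v2)) := by
    apply div_nonneg
    · have : 0 ≤ a*(1-a) := mul_nonneg ha hb
      positivity
    · positivity
  linarith

lemma cs4 (p1 q1 r1 w1 p2 q2 r2 w2 : ℝ) :
    p1*p2+q1*q2+r1*r2+w1*w2 ≤
      Real.sqrt (p1^2+(q1^2+r1^2+w1^2)) * Real.sqrt (p2^2+(q2^2+r2^2+w2^2)) := by
  set N1 := Real.sqrt (p1^2+(q1^2+r1^2+w1^2)) with hN1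
  set N2 := Real.sqrt (p2^2+(q2^2+r2^2+w2^2)) with hN2
  have h1 : N1^2 = p1^2+(q1^2+r1^2+w1^2) := Real.sq_sqrt (by positivity)
  have h2 : N2^2 = p2^2+(q2^2+r2^2+w2^2) := Real.sq_sqrt (by positivity)
  have hn1 : 0 ≤ N1 := Real.sqrt_nonneg _
  have hn2 : 0 ≤ N2 := Real.sqrt_nonneg _
  have hd2 : (p1*p2+q1*q2+r1*r2+w1*w2)^2 ≤ (N1*N2)^2 := by
    have : (N1*N2)^2 = (p1^2+(q1^2+r1^2+w1^2))*(p2^2+(q2^2+r2^2+w2^2)) := by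
      rw [mul_pow, h1, h2]
    rw [this]
    nlinarith [sq_nonneg (p1*q2-p2*q1), sq_nonneg (p1*r2-p2*r1), sq_nonneg (p1*w2-p2*w1),
      sq_nonneg (q1*r2-q2*r1), sq_nonneg (q1*w2-q2*w1), sq_nonneg (r1*w2-r2*w1)]
  nlinarith [hd2, mul_nonneg hn1 hn2]

lemma norm4 {a b : ℝ} (ha : 0 ≤ a) (hb : 0 ≤ b) (p1 q1 r1 w1 p2 q2 r2 w2 : ℝ) :
    Real.sqrt ((a*p1+b*p2)^2 + ((a*q1+b*q2)^2 + (a*r1+b*r2)^2 + (a*w1+b*w2)^2))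
      ≤ a * Real.sqrt (p1^2+(q1^2+r1^2+w1^2)) + b * Real.sqrt (p2^2+(q2^2+r2^2+w2^2)) := by
  set N1 := Real.sqrt (p1^2+(q1^2+r1^2+w1^2)) with hN1
  set N2 := Real.sqrt (p2^2+(q2^2+r2^2+w2^2)) with hN2
  have h1 : N1^2 = p1^2+(q1^2+r1^2+w1^2) := Real.sq_sqrt (by positivity)
  have h2 : N2^2 = p2^2+(q2^2+r2^2+w2^2) := Real.sq_sqrt (by positivity)
  have hn1 : 0 ≤ N1 := Real.sqrt_nonneg _
  have hn2 : 0 ≤ N2 := Real.sqrt_nonneg _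
  have hcs := cs4 p1 q1 r1 w1 p2 q2 r2 w2
  rw [← hN1, ← hN2] at hcs
  have hinner : (a*p1+b*p2)^2 + ((a*q1+b*q2)^2 + (a*r1+b*r2)^2 + (a*w1+b*w2)^2)
      ≤ (a*N1 + b*N2)^2 := by
    have e2 : (a*N1+b*N2)^2 = a^2*(N1^2) + 2*(a*b)*(N1*N2) + b^2*(N2^2) := by ring
    rw [e2, h1, h2]
    have e3 : 2*(a*b)*(p1*p2+q1*q2+r1*r2+w1*w2) ≤ 2*(a*b)*(N1*N2) :=
      mul_le_mul_of_nonneg_left hcs (by positivity)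
    nlinarith [e3]
  calc Real.sqrt ((a*p1+b*p2)^2 + ((a*q1+b*q2)^2 + (a*r1+b*r2)^2 + (a*w1+b*w2)^2))
      ≤ Real.sqrt ((a*N1+b*N2)^2) := Real.sqrt_le_sqrt hinner
    _ = a*N1+b*N2 := Real.sqrt_sq (by positivity)

lemma mono_g {g G S : ℝ} (hS : 0 ≤ S) (hg : g ≤ G) :
    g + Real.sqrt (g^2 + S) ≤ G + Real.sqrt (G^2+S) := by
  set u := Real.sqrt (g^2+S) with hu
  set v := Real.sqrt (G^2+S) with hv
  have hu2 : u^2 = g^2+S := Real.sq_sqrt (by positivity)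
  have hv2 : v^2 = G^2+S := Real.sq_sqrt (by positivity)
  have hun : 0 ≤ u := Real.sqrt_nonneg _
  have hvn : 0 ≤ v := Real.sqrt_nonneg _
  have hu' : -g ≤ u := by nlinarith
  have hv' : -G ≤ v := by nlinarith
  rcases le_or_gt u v with h | h
  · linarith
  · have huv : 0 < u + v := by nlinarith
    have key : (u-v)*(u+v) = (g-G)*(g+G) := by nlinarith
    nlinarith [mul_pos (sub_pos.mpr h) huv]

lemma scale_case {μ β y : ℝ} (hμ : 0 < μ) (hβ0 : 0 ≤ β) (hβ1 : β ≤ 1)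
    (hy0 : 0 ≤ y) (hyμ : y < μ) :
    Real.sqrt ((β*y)^3/(μ-β*y)) ≤ β * Real.sqrt (y^3/(μ-y)) := by
  have hby : β*y < μ := lt_of_le_of_lt (by nlinarith) hyμ
  have he1 : 0 < μ - β*y := sub_pos.mpr hby
  have he2 : 0 < μ - y := sub_pos.mpr hyμ
  have h1 : (β*y)^3/(μ-β*y) ≤ (β^2*y^3)/(μ-y) := by
    rw [div_le_div_iff₀ he1 he2]
    nlinarith [mul_nonneg (mul_nonneg (mul_nonneg (sq_nonneg β) (pow_nonneg hy0 3)) hμ.le)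
      (sub_nonneg.mpr hβ1)]
  calc Real.sqrt ((β*y)^3/(μ-β*y)) ≤ Real.sqrt ((β^2*y^3)/(μ-y)) := Real.sqrt_le_sqrt h1
    _ = β * Real.sqrt (y^3/(μ-y)) := by
        rw [show (β^2*y^3)/(μ-y) = β^2 * (y^3/(μ-y)) by ring,
          Real.sqrt_mul (sq_nonneg β), Real.sqrt_sq hβ0]

lemma sqrt_cube_form {μ Λ : ℝ} (h0 : 0 < Λ) (hμ : Λ < μ) :
    Real.sqrt (Λ^3/(μ-Λ)) = Λ^2 / Real.sqrt (Λ*(μ-Λ)) := by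
  have he : 0 < μ - Λ := sub_pos.mpr hμ
  have hw : 0 < Λ*(μ-Λ) := mul_pos h0 he
  have hws : 0 < Real.sqrt (Λ*(μ-Λ)) := Real.sqrt_pos.mpr hw
  have key : Λ^3/(μ-Λ) = (Λ^2 / Real.sqrt (Λ*(μ-Λ)))^2 := by
    rw [div_pow, Real.sq_sqrt hw.le]
    field_simp
  rw [key, Real.sqrt_sq (by positivity)]

lemma cube_lemma {μ a b x y : ℝ} (hμ : 0 < μ) (ha : 0 ≤ a) (hb : 0 ≤ b) (hab : a + b = 1)
    (hx0 : 0 ≤ x) (hxμ : x < μ) (hy0 : 0 ≤ y) (hyμ : y < μ) :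
    Real.sqrt ((a*x+b*y)^3/(μ-(a*x+b*y))) ≤
      a * Real.sqrt (x^3/(μ-x)) + b * Real.sqrt (y^3/(μ-y)) := by
  have ha1 : a ≤ 1 := by linarith
  have hb1 : b ≤ 1 := by linarith
  have hnx : 0 ≤ Real.sqrt (x^3/(μ-x)) := Real.sqrt_nonneg _
  have hny : 0 ≤ Real.sqrt (y^3/(μ-y)) := Real.sqrt_nonneg _
  rcases ha.eq_or_lt with haz | hap
  · have hb' : b = 1 := by linarith
    rw [← haz, hb']
    simp
  rcases hb.eq_or_lt with hbz | hbp
  · have ha' : a = 1 := by linarith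
    rw [← hbz, ha']
    simp
  rcases hx0.eq_or_lt with hxz | hxp
  · rw [← hxz]
    simp only [mul_zero, zero_mul, zero_add, ne_eq, OfNat.ofNat_ne_zero,
      not_false_eq_true, zero_pow, sub_zero, zero_div, Real.sqrt_zero, zero_add]
    exact scale_case hμ hb hb1 hy0 hyμ
  rcases hy0.eq_or_lt with hyz | hyp
  · rw [← hyz]
    simp only [mul_zero, zero_mul, add_zero, ne_eq, OfNat.ofNat_ne_zero,
      not_false_eq_true, zero_pow, sub_zero, zero_div, Real.sqrt_zero]
    exact le_trans (scale_case hμ ha ha1 hx0 hxμ) (by linarith)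
  -- main case
  set c := a*x + b*y with hc
  have hc0 : 0 < c := by positivity
  have hcμ : c < μ := by nlinarith
  have hex : 0 < μ - x := sub_pos.mpr hxμ
  have hey : 0 < μ - y := sub_pos.mpr hyμ
  set wx := Real.sqrt (x*(μ-x)) with hwx
  set wy := Real.sqrt (y*(μ-y)) with hwy
  set wc := Real.sqrt (c*(μ-c)) with hwc
  have hwxp : 0 < wx := Real.sqrt_pos.mpr (by positivity)
  have hwyp : 0 < wy := Real.sqrt_pos.mpr (by positivity)
  have hwx2 : wx^2 = x*(μ-x) := Real.sq_sqrt (by positivity)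
  have hwy2 : wy^2 = y*(μ-y) := Real.sq_sqrt (by positivity)
  have hwc2 : wc^2 = c*(μ-c) := Real.sq_sqrt (mul_nonneg hc0.le (by linarith))
  have hconc : a*wx + b*wy ≤ wc := by
    have e1 : c*(μ-c) = a*(x*(μ-x)) + b*(y*(μ-y)) + a*b*(x-y)^2 := by
      have hb' : b = 1-a := by linarith
      rw [hc, hb']; ring
    have e2 : a*(wx^2) + b*(wy^2) - (a*wx+b*wy)^2 = a*b*(wx-wy)^2 := by
      have hb' : b = 1-a := by linarith
      rw [hb']; ring
    have h1 : (a*wx+b*wy)^2 ≤ c*(μ-c) := by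
      nlinarith [e1, e2, hwx2, hwy2, mul_nonneg (mul_nonneg ha hb) (sq_nonneg (wx-wy)),
        mul_nonneg (mul_nonneg ha hb) (sq_nonneg (x-y))]
    calc a*wx+b*wy = Real.sqrt ((a*wx+b*wy)^2) := (Real.sqrt_sq (by positivity)).symm
      _ ≤ wc := by rw [hwc]; exact Real.sqrt_le_sqrt h1
  have hsum : 0 < a*wx + b*wy := by positivity
  rw [sqrt_cube_form hc0 hcμ, sqrt_cube_form hxp hxμ, sqrt_cube_form hyp hyμ]
  rw [← hwx, ← hwy, ← hwc]
  calc c^2/wc ≤ c^2/(a*wx+b*wy) := by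
        gcongr
    _ = (a*x+b*y)^2/(a*wx+b*wy) := by rw [hc]
    _ ≤ a*(x^2/wx) + b*(y^2/wy) := qol ha hb hab hwxp hwyp

lemma combo_core {a b pc px py s1c s1x s1y s2c s2x s2y s3c s3x s3y lam2 : ℝ}
    (hlam : 0 < lam2) (ha : 0 ≤ a) (hb : 0 ≤ b)
    (hs1c : 0 ≤ s1c) (hs2c : 0 ≤ s2c) (hs3c : 0 ≤ s3c)
    (hp : pc ≤ a*px + b*py) (h1 : s1c ≤ a*s1x + b*s1y)
    (h2 : s2c ≤ a*s2x + b*s2y) (h3 : s3c ≤ a*s3x + b*s3y) :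
    (pc + Real.sqrt (pc^2 + (s1c^2 + s2c^2 + s3c^2))) / lam2 ≤
      a * ((px + Real.sqrt (px^2 + (s1x^2 + s2x^2 + s3x^2)))/lam2)
      + b * ((py + Real.sqrt (py^2 + (s1y^2 + s2y^2 + s3y^2)))/lam2) := by
  have hS : 0 ≤ s1c^2 + s2c^2 + s3c^2 := by positivity
  have step1 := mono_g hS hp
  have step2 : Real.sqrt ((a*px+b*py)^2 + (s1c^2 + s2c^2 + s3c^2)) ≤
      Real.sqrt ((a*px+b*py)^2 + ((a*s1x+b*s1y)^2 + (a*s2x+b*s2y)^2 + (a*s3x+b*s3y)^2)) := by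
    apply Real.sqrt_le_sqrt
    have q1 : s1c^2 ≤ (a*s1x+b*s1y)^2 := pow_le_pow_left₀ hs1c h1 2
    have q2 : s2c^2 ≤ (a*s2x+b*s2y)^2 := pow_le_pow_left₀ hs2c h2 2
    have q3 : s3c^2 ≤ (a*s3x+b*s3y)^2 := pow_le_pow_left₀ hs3c h3 2
    linarith
  have step3 := norm4 ha hb px s1x s2x s3x py s1y s2y s3y
  calc (pc + Real.sqrt (pc^2 + (s1c^2 + s2c^2 + s3c^2))) / lam2
      ≤ ((a*px+b*py) + (a * Real.sqrt (px^2 + (s1x^2 + s2x^2 + s3x^2))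
          + b * Real.sqrt (py^2 + (s1y^2 + s2y^2 + s3y^2)))) / lam2 := by
        gcongr (?_ : ℝ) / lam2
        linarith [step1, step2, step3]
    _ = a * ((px + Real.sqrt (px^2 + (s1x^2 + s2x^2 + s3x^2)))/lam2)
        + b * ((py + Real.sqrt (py^2 + (s1y^2 + s2y^2 + s3y^2)))/lam2) := by ring

noncomputable def Fr (μ lamhat cz γ κ σsq Λ : ℝ) : ℝ :=
  ((cz*Λ + γ*(Λ^2/(μ-Λ))) +
    Real.sqrt ((cz*Λ + γ*(Λ^2/(μ-Λ)))^2 +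
      ((γ*(Λ^2/(μ-Λ)))^2 + (Real.sqrt σsq * Λ)^2
        + (Real.sqrt (κ*(Λ^3/(μ-Λ))))^2))) / (2*lamhat)

lemma Fr_combo {μ lamhat cz γ κ σsq a b x y : ℝ} (hμ : 0 < μ) (hlam : 0 < lamhat)
    (hγ : 0 ≤ γ) (hκ : 0 ≤ κ) (hσ : 0 ≤ σsq)
    (ha : 0 ≤ a) (hb : 0 ≤ b) (hab : a + b = 1)
    (hx0 : 0 ≤ x) (hxμ : x < μ) (hy0 : 0 ≤ y) (hyμ : y < μ) :
    Fr μ lamhat cz γ κ σsq (a*x+b*y) ≤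
      a * Fr μ lamhat cz γ κ σsq x + b * Fr μ lamhat cz γ κ σsq y := by
  have hc0 : 0 ≤ a*x+b*y := by positivity
  have hcμ : a*x+b*y < μ := by
    rcases ha.eq_or_lt with h | h
    · have hb' : b = 1 := by linarith
      rw [← h, hb']
      simpa using hyμ
    · nlinarith [mul_nonneg hb (sub_pos.mpr hyμ).le]
  have hex : 0 < μ - x := sub_pos.mpr hxμ
  have hey : 0 < μ - y := sub_pos.mpr hyμ
  have hec : 0 < μ - (a*x+b*y) := sub_pos.mpr hcμ
  have hq := qol ha hb hab hex hey (u1 := x) (u2 := y)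
  have hden : a*(μ-x)+b*(μ-y) = μ-(a*x+b*y) := by
    have hb' : b = 1-a := by linarith
    rw [hb']; ring
  rw [hden] at hq
  have hp : cz*(a*x+b*y) + γ*((a*x+b*y)^2/(μ-(a*x+b*y))) ≤
      a*(cz*x + γ*(x^2/(μ-x))) + b*(cz*y + γ*(y^2/(μ-y))) := by
    nlinarith [mul_le_mul_of_nonneg_left hq hγ]
  have h1 : γ*((a*x+b*y)^2/(μ-(a*x+b*y))) ≤
      a*(γ*(x^2/(μ-x))) + b*(γ*(y^2/(μ-y))) := by
    nlinarith [mul_le_mul_of_nonneg_left hq hγ]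
  have h2 : Real.sqrt σsq * (a*x+b*y) ≤ a*(Real.sqrt σsq * x) + b*(Real.sqrt σsq * y) :=
    le_of_eq (by ring)
  have h3 : Real.sqrt (κ*((a*x+b*y)^3/(μ-(a*x+b*y)))) ≤
      a*(Real.sqrt (κ*(x^3/(μ-x)))) + b*(Real.sqrt (κ*(y^3/(μ-y)))) := by
    rw [Real.sqrt_mul hκ, Real.sqrt_mul hκ, Real.sqrt_mul hκ]
    have hcube := cube_lemma hμ ha hb hab hx0 hxμ hy0 hyμ
    nlinarith [mul_le_mul_of_nonneg_left hcube (Real.sqrt_nonneg κ)]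
  unfold Fr
  exact combo_core (by positivity) ha hb
    (mul_nonneg hγ (div_nonneg (by positivity) hec.le))
    (mul_nonneg (Real.sqrt_nonneg _) hc0)
    (Real.sqrt_nonneg _) hp h1 h2 h3

/-- Lemma 6: the per-node latency contribution
`F(Λ) = (Λ / (2λ̂)) (X(Λ) + sqrt(X(Λ)² + Y(Λ)))` is convex in the arrival rate
`Λ` on `[0, μ)`. -/
theorem F_convex (μ Γsq σsq Γhat3 Γ4 lamhat z : ℝ)
    (hμ : 0 < μ) (hΓ : 0 < Γsq) (hσ : 0 ≤ σsq) (hΓ3 : 0 ≤ Γhat3)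
    (hΓ4 : Γ4 = Γsq ^ 2) (hlam : 0 < lamhat)
    (X Y : ℝ → ℝ)
    (hX : ∀ Λ, X Λ = 1 / μ + Λ * Γsq / (2 * (1 - Λ / μ)) - z)
    (hY : ∀ Λ, Y Λ = σsq + Λ * Γhat3 / (3 * (1 - Λ / μ))
        + Λ ^ 2 * Γ4 / (4 * (1 - Λ / μ) ^ 2)) :
    ConvexOn ℝ (Set.Ico (0 : ℝ) μ)
      (fun Λ => (Λ / (2 * lamhat)) * (X Λ + Real.sqrt ((X Λ) ^ 2 + Y Λ))) := by
  have key : ∀ Λ, 0 ≤ Λ → Λ < μ →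
      (Λ / (2 * lamhat)) * (X Λ + Real.sqrt ((X Λ) ^ 2 + Y Λ)) =
        Fr μ lamhat (1/μ - z) (Γsq*μ/2) (μ*Γhat3/3) σsq Λ := by
    intro Λ h0 hlt
    have he : 0 < μ - Λ := sub_pos.mpr hlt
    have hμ' : (μ:ℝ) ≠ 0 := ne_of_gt hμ
    have he' : μ - Λ ≠ 0 := ne_of_gt he
    have hrat : 1 - Λ/μ ≠ 0 := by
      rw [show (1:ℝ) - Λ/μ = (μ-Λ)/μ by field_simp]
      exact div_ne_zero he' hμ'
    have hP : Λ * X Λ = (1/μ - z)*Λ + (Γsq*μ/2)*(Λ^2/(μ-Λ)) := by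
      rw [hX]
      field_simp
      ring
    have hs2 : (Real.sqrt σsq * Λ)^2 = σsq * Λ^2 := by
      rw [mul_pow, Real.sq_sqrt hσ]
    have hs3 : (Real.sqrt ((μ*Γhat3/3)*(Λ^3/(μ-Λ))))^2 = (μ*Γhat3/3)*(Λ^3/(μ-Λ)) :=
      Real.sq_sqrt (mul_nonneg (by positivity) (div_nonneg (by positivity) he.le))
    have hQ : Λ^2 * ((X Λ)^2 + Y Λ) =
        ((1/μ - z)*Λ + (Γsq*μ/2)*(Λ^2/(μ-Λ)))^2 +
          (((Γsq*μ/2)*(Λ^2/(μ-Λ)))^2 + σsq*Λ^2 + (μ*Γhat3/3)*(Λ^3/(μ-Λ))) := by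
      rw [hX, hY, hΓ4]
      field_simp
      ring
    have hsqrt : Λ * Real.sqrt ((X Λ)^2 + Y Λ) =
        Real.sqrt (((1/μ - z)*Λ + (Γsq*μ/2)*(Λ^2/(μ-Λ)))^2 +
          (((Γsq*μ/2)*(Λ^2/(μ-Λ)))^2 + (Real.sqrt σsq * Λ)^2
            + (Real.sqrt ((μ*Γhat3/3)*(Λ^3/(μ-Λ))))^2)) := by
      rw [hs2, hs3, ← hQ, Real.sqrt_mul (sq_nonneg Λ), Real.sqrt_sq h0]
    have expand : (Λ / (2 * lamhat)) * (X Λ + Real.sqrt ((X Λ)^2 + Y Λ)) =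
        (Λ * X Λ + Λ * Real.sqrt ((X Λ)^2 + Y Λ)) / (2*lamhat) := by ring
    rw [expand, hP, hsqrt]
    rfl
  refine ⟨convex_Ico 0 μ, ?_⟩
  intro x hx y hy a b ha hb hab
  obtain ⟨hx0, hxμ⟩ := hx
  obtain ⟨hy0, hyμ⟩ := hy
  simp only [smul_eq_mul]
  have hc0 : 0 ≤ a*x+b*y := by positivity
  have hcμ : a*x+b*y < μ := by
    rcases ha.eq_or_lt with h | h
    · have hb' : b = 1 := by linarith
      rw [← h, hb']
      simpa using hyμ
    · nlinarith [mul_nonneg hb (sub_pos.mpr hyμ).le]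
  rw [key _ hc0 hcμ, key x hx0 hxμ, key y hy0 hyμ]
  exact Fr_combo hμ hlam (by positivity) (by positivity) hσ ha hb hab hx0 hxμ hy0 hyμ
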